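/- Let Γ be a finite graph and Γ_0 ⊆ Γ the full subgraph of vertices not adjacent to every other vertex of Γ. Then the right-angled Artin Lie algebra 𝔞 = gr(A_{Γ_0}) over a field of characteristic 0 has trivial center. -/

import Mathlib

/-!
STATEMENT 17: Let `Γ₀ ⊆ Γ` be the full subgraph of vertices not adjacent to every other
vertex of `Γ`. Then the right-angled Artin Lie algebra `𝔞 = gr(A_{Γ₀})` over a field of
characteristic 0 has trivial center.
-/

/-- The star of a vertex: the vertex together with its neighbours. -/
def graphStar {V : Type*} (Γ : SimpleGraph V) (v : V) : Set V :=
  insert v (Γ.neighborSet v)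

/-- The connected component (as a set of vertices of `V`) of the vertex `u` in the induced
subgraph of `Γ` on the set `s`. -/
def compIn {V : Type*} (Γ : SimpleGraph V) (s : Set V) (u : V) : Set V :=
  {x | ∃ (hu : u ∈ s) (hx : x ∈ s), (Γ.induce s).Reachable ⟨u, hu⟩ ⟨x, hx⟩}

/-- The defining relators of the right-angled Artin Lie algebra of a graph. -/
def raagLieRels (k : Type*) [Field k] {W : Type*} (Λ : SimpleGraph W) :
    Set (FreeLieAlgebra k W) :=
  {z | ∃ u v : W, Λ.Adj u v ∧ z = ⁅FreeLieAlgebra.of k u, FreeLieAlgebra.of k v⁆}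

/-- The right-angled Artin Lie algebra of a graph `Λ` over `k`: the quotient of the free
Lie algebra on the vertices by the ideal generated by the brackets of adjacent vertices. -/
abbrev RaagLie (k : Type*) [Field k] {W : Type*} (Λ : SimpleGraph W) : Type _ :=
  FreeLieAlgebra k W ⧸ LieSubmodule.lieSpan k (FreeLieAlgebra k W) (raagLieRels k Λ)

/-- The generator of the right-angled Artin Lie algebra at a vertex. -/
noncomputable def raagLieGen (k : Type*) [Field k] {W : Type*} (Λ : SimpleGraph W) (w : W) : RaagLie k Λ :=
  LieSubmodule.Quotient.mk (FreeLieAlgebra.of k w)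

/-- The set of vertices of `Γ` which are not adjacent to every other vertex. -/
def gammaZero {V : Type*} (Γ : SimpleGraph V) : Set V :=
  {v | ∃ u, u ≠ v ∧ ¬ Γ.Adj v u}

namespace RaagProof

attribute [local instance] LieRing.ofAssociativeRing

variable {k : Type*} [Field k] {W : Type*} [DecidableEq W] (Λ : SimpleGraph W)

/-- The base relation for the trace monoid of `Λ`. -/
def rel : FreeMonoid W → FreeMonoid W → Prop :=
  fun a b => ∃ s t, Λ.Adj s t ∧ a = FreeMonoid.of s * FreeMonoid.of t ∧
    b = FreeMonoid.of t * FreeMonoid.of s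

/-- The trace monoid congruence. -/
abbrev tcon : Con (FreeMonoid W) := conGen (rel Λ)

/-- The trace monoid of the graph `Λ`. -/
abbrev M := (tcon Λ).Quotient

/-- Canonical projection to the trace monoid. -/
def mkM : FreeMonoid W →* M Λ := (tcon Λ).mk'

lemma mkM_surjective : Function.Surjective (mkM Λ) :=
  fun x => Quotient.exists_rep x

/-- The length homomorphism on the trace monoid. -/
def lenM : M Λ →* Multiplicative ℕ :=
  Con.lift _ (FreeMonoid.lift fun _ => Multiplicative.ofAdd 1) (by
    refine Con.conGen_le.mpr ?_
    rintro a b ⟨s, t, _, rfl, rfl⟩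
    simp [Con.ker_rel, mul_comm])

lemma lenM_mkM (l : FreeMonoid W) :
    lenM Λ (mkM Λ l) = Multiplicative.ofAdd (l.toList.length) := by
  induction l using FreeMonoid.recOn with
  | one => simp [lenM, mkM]
  | of_mul x xs ih =>
      rw [map_mul, map_mul]
      rw [lenM, mkM] at ih ⊢
      simp only [Con.lift_mk'] at ih ⊢
      simp [ih, FreeMonoid.lift_apply, ← ofAdd_add, add_comm]

/-- Number of occurrences of a letter, as a monoid hom on the trace monoid. -/
def occ (u : W) : M Λ →* Multiplicative ℕ :=
  Con.lift _ (FreeMonoid.lift fun w => Multiplicative.ofAdd (if w = u then 1 else 0)) (by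
    refine Con.conGen_le.mpr ?_
    rintro a b ⟨s, t, _, rfl, rfl⟩
    simp [Con.ker_rel, mul_comm])

lemma occ_mkM (u : W) (l : FreeMonoid W) :
    occ Λ u (mkM Λ l) = Multiplicative.ofAdd (l.toList.count u) := by
  induction l using FreeMonoid.recOn with
  | one => simp [occ, mkM]
  | of_mul x xs ih =>
      rw [map_mul, map_mul]
      rw [occ, mkM] at ih ⊢
      simp only [Con.lift_mk'] at ih ⊢
      simp only [ih, FreeMonoid.lift_apply, FreeMonoid.toList_of, List.map_cons, List.prod_cons,
        List.map_nil, List.prod_nil, mul_one]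
      rw [FreeMonoid.toList_of_mul, List.count_cons, ← ofAdd_add]
      congr 1
      rcases eq_or_ne x u with h | h <;> simp [h, add_comm]

set_option linter.unusedSectionVars false

lemma mkM_eq_one {l : FreeMonoid W} (h : mkM Λ l = 1) : l = 1 := by
  have := lenM_mkM Λ l
  rw [h, map_one] at this
  have h0 : l.toList.length = 0 := by
    have h2 := congrArg Multiplicative.toAdd this
    simpa using h2.symm
  have h3 : l.toList = [] := List.eq_nil_of_length_eq_zero h0
  have := congrArg FreeMonoid.ofList h3
  simpa using this

/-- Projection to the letters `u`, `v`, on the free monoid. -/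
def projF (u v : W) : FreeMonoid W →* FreeMonoid W :=
  FreeMonoid.lift fun w => if w = u ∨ w = v then FreeMonoid.of w else 1

lemma projF_toList (u v : W) (l : FreeMonoid W) :
    (projF u v l).toList = l.toList.filter (fun w => decide (w = u ∨ w = v)) := by
  induction l using FreeMonoid.recOn with
  | one => simp [projF]
  | of_mul x xs ih =>
      rw [map_mul, FreeMonoid.toList_mul, ih, FreeMonoid.toList_of_mul, List.filter_cons]
      by_cases h : x = u ∨ x = v
      · simp [projF, FreeMonoid.lift_eval_of, h]
      · simp [projF, FreeMonoid.lift_eval_of, h]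

/-- Projection to a non-adjacent pair of letters, on the trace monoid. -/
def projM (u v : W) (huv : ¬ Λ.Adj u v) : M Λ →* FreeMonoid W :=
  Con.lift _ (projF u v) (by
    refine Con.conGen_le.mpr ?_
    rintro a b ⟨s, t, hst, rfl, rfl⟩
    rw [Con.ker_rel, map_mul, map_mul]
    by_cases hs : s = u ∨ s = v <;> by_cases ht : t = u ∨ t = v
    · exfalso
      have hne : s ≠ t := hst.ne
      rcases hs with rfl | rfl <;> rcases ht with rfl | rfl
      · exact hne rfl
      · exact huv hst
      · exact huv hst.symm
      · exact hne rfl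
    · simp [projF, FreeMonoid.lift_eval_of, hs, ht]
    · simp [projF, FreeMonoid.lift_eval_of, hs, ht]
    · simp [projF, FreeMonoid.lift_eval_of, hs, ht])

lemma projM_mkM (u v : W) (huv : ¬ Λ.Adj u v) (l : FreeMonoid W) :
    projM Λ u v huv (mkM Λ l) = projF u v l := rfl

lemma mkM_swap (s t : W) (h : Λ.Adj s t) (x y : FreeMonoid W) :
    mkM Λ (x * (FreeMonoid.of s * FreeMonoid.of t) * y)
      = mkM Λ (x * (FreeMonoid.of t * FreeMonoid.of s) * y) := by
  refine Quotient.sound ?_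
  refine ConGen.Rel.mul (ConGen.Rel.mul (ConGen.Rel.refl x) ?_) (ConGen.Rel.refl y)
  exact ConGen.Rel.of _ _ ⟨s, t, h, rfl, rfl⟩

lemma mkM_moveFront (a : W) (p s : FreeMonoid W)
    (hp : ∀ c ∈ p.toList, Λ.Adj c a) :
    mkM Λ (p * FreeMonoid.of a * s) = mkM Λ (FreeMonoid.of a * p * s) := by
  induction p using FreeMonoid.recOn with
  | one => simp
  | of_mul c p' ih =>
      have hca : Λ.Adj c a := hp c (by simp)
      have hp' : ∀ x ∈ p'.toList, Λ.Adj x a := fun x hx => hp x (by simp [hx])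
      calc mkM Λ (FreeMonoid.of c * p' * FreeMonoid.of a * s)
          = mkM Λ (FreeMonoid.of c) * mkM Λ (p' * FreeMonoid.of a * s) := by
            rw [← map_mul]; congr 1
        _ = mkM Λ (FreeMonoid.of c) * mkM Λ (FreeMonoid.of a * p' * s) := by
            rw [ih hp']
        _ = mkM Λ (1 * (FreeMonoid.of c * FreeMonoid.of a) * (p' * s)) := by
            rw [← map_mul]; congr 1
        _ = mkM Λ (1 * (FreeMonoid.of a * FreeMonoid.of c) * (p' * s)) :=
            mkM_swap Λ c a hca 1 (p' * s)
        _ = mkM Λ (FreeMonoid.of a * (FreeMonoid.of c * p') * s) := by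
            congr 1

lemma exists_first_split {a : W} : ∀ {l : List W}, a ∈ l →
    ∃ p s : List W, l = p ++ a :: s ∧ a ∉ p := by
  intro l
  induction l with
  | nil => intro h; simp at h
  | cons b t ih =>
      intro h
      rcases eq_or_ne b a with rfl | hba
      · exact ⟨[], t, rfl, by simp⟩
      · have ha : a ∈ t := by
          rcases List.mem_cons.mp h with h' | h'
          · exact absurd h'.symm hba
          · exact h'
        obtain ⟨p, s, rfl, hp⟩ := ih ha
        exact ⟨b :: p, s, rfl, by simp [hp, hba.symm]⟩

lemma proj_inj_list : ∀ (n : ℕ) (l l' : List W), l.length = n →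
    (∀ u : W, l.count u = l'.count u) →
    (∀ u v : W, u ≠ v → ¬ Λ.Adj u v →
      l.filter (fun w => decide (w = u ∨ w = v)) = l'.filter (fun w => decide (w = u ∨ w = v))) →
    mkM Λ (FreeMonoid.ofList l) = mkM Λ (FreeMonoid.ofList l') := by
  intro n
  induction n with
  | zero =>
      intro l l' hlen hcount _
      have hl : l = [] := List.eq_nil_of_length_eq_zero hlen
      subst hl
      cases l' with
      | nil => rfl
      | cons a t =>
          exfalso
          have := hcount a
          simp at this
  | succ n ih =>
      intro l l' hlen hcount hfilter
      cases l with
      | nil => simp at hlen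
      | cons a t =>
        have ha : a ∈ l' := by
          have h1 := hcount a
          have : 0 < l'.count a := by
            rw [← h1]; simp
          exact List.count_pos_iff.mp this
        obtain ⟨p, s, rfl, hap⟩ := exists_first_split ha
        -- every letter of p is adjacent to a
        have hadj : ∀ c ∈ p, Λ.Adj c a := by
          intro c hc
          by_contra hnadj
          have hca : c ≠ a := fun h => hap (h ▸ hc)
          have hfil := hfilter c a hca (fun h => hnadj h)
          have hl : (a :: t).filter (fun w => decide (w = c ∨ w = a))
              = a :: t.filter (fun w => decide (w = c ∨ w = a)) := by
            simp [List.filter_cons]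
          have hr : (p ++ a :: s).filter (fun w => decide (w = c ∨ w = a))
              = p.filter (fun w => decide (w = c ∨ w = a))
                ++ a :: s.filter (fun w => decide (w = c ∨ w = a)) := by
            simp [List.filter_append, List.filter_cons]
          rw [hl, hr] at hfil
          have hcp : c ∈ p.filter (fun w => decide (w = c ∨ w = a)) := by
            simp [List.mem_filter, hc]
          cases hfp : p.filter (fun w => decide (w = c ∨ w = a)) with
          | nil => rw [hfp] at hcp; simp at hcp
          | cons x xs =>
              rw [hfp] at hfil
              have hxa : x = a := by
                have := List.head_eq_of_cons_eq hfil.symm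
                exact this
              have hx : x ∈ p.filter (fun w => decide (w = c ∨ w = a)) := by
                rw [hfp]; simp
              have hxp : x ∈ p := (List.mem_filter.mp hx).1
              exact hap (hxa ▸ hxp)
        -- move a to the front of l'
        have hmove : mkM Λ (FreeMonoid.ofList (p ++ a :: s))
            = mkM Λ (FreeMonoid.ofList (a :: (p ++ s))) := by
          have h1 : FreeMonoid.ofList (p ++ a :: s)
              = FreeMonoid.ofList p * FreeMonoid.of a * FreeMonoid.ofList s := by
            rw [FreeMonoid.ofList_append, FreeMonoid.ofList_cons, ← mul_assoc]
          have h2 : FreeMonoid.ofList (a :: (p ++ s))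
              = FreeMonoid.of a * FreeMonoid.ofList p * FreeMonoid.ofList s := by
            rw [FreeMonoid.ofList_cons, FreeMonoid.ofList_append, ← mul_assoc]
          rw [h1, h2]
          exact mkM_moveFront Λ a (FreeMonoid.ofList p) (FreeMonoid.ofList s)
            (by intro c hc; exact hadj c (by simpa using hc))
        rw [hmove]
        -- reduce to tails
        have key : mkM Λ (FreeMonoid.ofList t) = mkM Λ (FreeMonoid.ofList (p ++ s)) := by
          refine ih t (p ++ s) (by simpa using hlen) ?_ ?_
          · intro u
            have h1 := hcount u
            simp only [List.count_cons, List.count_append] at h1 ⊢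
            omega
          · intro u v huv hnadj
            have hfil := hfilter u v huv hnadj
            by_cases hpa : a = u ∨ a = v
            · -- filter p is empty
              have hfp : p.filter (fun w => decide (w = u ∨ w = v)) = [] := by
                rw [List.filter_eq_nil_iff]
                intro c hc hcuv
                have hcuv' : c = u ∨ c = v := by simpa using hcuv
                have hca : c ≠ a := fun h => hap (h ▸ hc)
                have hadjca : Λ.Adj c a := hadj c hc
                rcases hcuv' with rfl | rfl <;> rcases hpa with rfl | rfl
                · exact hca rfl
                · exact hnadj hadjca
                · exact hnadj hadjca.symm
                · exact hca rfl
              have hpred : decide (a = u ∨ a = v) = true := by simpa using hpa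
              simp only [List.filter_cons, List.filter_append, hpred, hfp, if_true,
                List.nil_append, cond_true] at hfil ⊢
              exact List.tail_eq_of_cons_eq hfil
            · have hpred : decide (a = u ∨ a = v) = false := by simpa using hpa
              simp only [List.filter_cons, List.filter_append, hpred, cond_false,
                Bool.false_eq_true, if_false] at hfil ⊢
              exact hfil
        calc mkM Λ (FreeMonoid.ofList (a :: t))
            = mkM Λ (FreeMonoid.of a) * mkM Λ (FreeMonoid.ofList t) := by
              rw [← map_mul, ← FreeMonoid.ofList_cons]
          _ = mkM Λ (FreeMonoid.of a) * mkM Λ (FreeMonoid.ofList (p ++ s)) := by rw [key]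
          _ = mkM Λ (FreeMonoid.ofList (a :: (p ++ s))) := by rw [← map_mul, ← FreeMonoid.ofList_cons]

lemma proj_inj {x y : M Λ} (hocc : ∀ u, occ Λ u x = occ Λ u y)
    (hproj : ∀ (u v : W) (huv : u ≠ v) (h : ¬ Λ.Adj u v), projM Λ u v h x = projM Λ u v h y) :
    x = y := by
  obtain ⟨l, rfl⟩ := mkM_surjective Λ x
  obtain ⟨l', rfl⟩ := mkM_surjective Λ y
  have h1 : mkM Λ (FreeMonoid.ofList l.toList) = mkM Λ (FreeMonoid.ofList l'.toList) := by
    refine proj_inj_list Λ l.toList.length l.toList l'.toList rfl ?_ ?_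
    · intro u
      have := hocc u
      rw [occ_mkM, occ_mkM] at this
      exact Multiplicative.ofAdd.injective this
    · intro u v huv hnadj
      have := hproj u v huv hnadj
      rw [projM_mkM, projM_mkM] at this
      have := congrArg FreeMonoid.toList this
      rwa [projF_toList, projF_toList] at this
  rwa [FreeMonoid.ofList_toList, FreeMonoid.ofList_toList] at h1

lemma mul_cancel_left {a x y : M Λ} (h : a * x = a * y) : x = y := by
  refine proj_inj Λ ?_ ?_
  · intro u
    have := congrArg (occ Λ u) h
    rw [map_mul, map_mul] at this
    exact mul_left_cancel this
  · intro u v huv hnadj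
    have := congrArg (projM Λ u v hnadj) h
    rw [map_mul, map_mul] at this
    exact mul_left_cancel this

lemma mul_cancel_right {a x y : M Λ} (h : x * a = y * a) : x = y := by
  refine proj_inj Λ ?_ ?_
  · intro u
    have := congrArg (occ Λ u) h
    rw [map_mul, map_mul] at this
    exact mul_right_cancel this
  · intro u v huv hnadj
    have := congrArg (projM Λ u v hnadj) h
    rw [map_mul, map_mul] at this
    exact mul_right_cancel this

/-- In a free monoid, an element commuting with a positive power of a single letter
has all its letters equal to that letter. -/
lemma freeMonoid_comm_power {w : W} : ∀ (x : List W) (j : ℕ), 0 < j →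
    x ++ List.replicate j w = List.replicate j w ++ x → ∀ c ∈ x, c = w := by
  intro x
  induction x with
  | nil => intro j _ _ c hc; simp at hc
  | cons b t ih =>
      intro j hj hcomm c hc
      -- first letter of RHS is w
      have hbw : b = w := by
        have := congrArg (fun l => l.head?) hcomm
        cases j with
        | zero => omega
        | succ j' =>
            simp [List.replicate_succ] at this
            exact this
      rcases List.mem_cons.mp hc with rfl | hct
      · exact hbw
      · refine ih j hj ?_ c hct
        rw [hbw] at hcomm
        have hl : (w :: t) ++ List.replicate j w = w :: (t ++ List.replicate j w) := by simp
        have hr : List.replicate j w ++ (w :: t) = w :: (List.replicate j w ++ t) := by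
          cases j with
          | zero => omega
          | succ j' =>
              rw [List.replicate_succ, List.cons_append]
              congr 1
              rw [← List.replicate_succ, List.replicate_succ']
              simp
        rw [hl, hr] at hcomm
        exact List.cons_injective hcomm

section Central

variable (kk : Type*) [Field kk]

lemma single_mul_eq_mapDomain (g : M Λ) (f : MonoidAlgebra kk (M Λ)) :
    MonoidAlgebra.single g (1:kk) * f = MonoidAlgebra.mapDomain (fun m => g * m) f := by
  induction f using MonoidAlgebra.induction with
  | zero => simp [MonoidAlgebra.mapDomain_zero]
  | single_add m c f' hm hc ih =>
      rw [mul_add, MonoidAlgebra.mapDomain_add, ih]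
      congr 1
      rw [MonoidAlgebra.single_mul_single, one_mul, MonoidAlgebra.mapDomain_single]

lemma mul_single_eq_mapDomain (g : M Λ) (f : MonoidAlgebra kk (M Λ)) :
    f * MonoidAlgebra.single g (1:kk) = MonoidAlgebra.mapDomain (fun m => m * g) f := by
  induction f using MonoidAlgebra.induction with
  | zero => simp [MonoidAlgebra.mapDomain_zero]
  | single_add m c f' hm hc ih =>
      rw [add_mul, MonoidAlgebra.mapDomain_add, ih]
      congr 1
      rw [MonoidAlgebra.single_mul_single, mul_one, MonoidAlgebra.mapDomain_single]

/-- One step of the pushing argument: if `f` commutes with the generator `w̄`,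
then for `x` in the support of `f` there is `x'` in the support with `w̄ * x = x' * w̄`. -/
lemma central_step {f : MonoidAlgebra kk (M Λ)} {w : W}
    (hcomm : MonoidAlgebra.single (mkM Λ (FreeMonoid.of w)) (1:kk) * f
      = f * MonoidAlgebra.single (mkM Λ (FreeMonoid.of w)) 1)
    {x : M Λ} (hx : x ∈ f.coeff.support) :
    ∃ x' ∈ f.coeff.support, mkM Λ (FreeMonoid.of w) * x = x' * mkM Λ (FreeMonoid.of w) := by
  set g := mkM Λ (FreeMonoid.of w) with hg
  have hinj : Function.Injective (fun m => g * m) := fun a b h => mul_cancel_left Λ h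
  have h1 : (MonoidAlgebra.mapDomain (fun m => g * m) f).coeff (g * x) = f.coeff x :=
    Finsupp.mapDomain_apply hinj f.coeff x
  have hx0 : f.coeff x ≠ 0 := Finsupp.mem_support_iff.mp hx
  have h2 : (MonoidAlgebra.mapDomain (fun m => m * g) f).coeff (g * x) ≠ 0 := by
    rw [← mul_single_eq_mapDomain, ← hcomm, single_mul_eq_mapDomain, h1]
    exact hx0
  classical
  have h3 : g * x ∈ (Finsupp.mapDomain (fun m => m * g) f.coeff).support :=
    Finsupp.mem_support_iff.mpr h2
  obtain ⟨x', hx', hxx⟩ := Finset.mem_image.mp (Finsupp.mapDomain_support h3)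
  exact ⟨x', hx', hxx.symm⟩

end Central

lemma toList_pow_of (w : W) : ∀ (n : ℕ), (FreeMonoid.of w ^ n).toList = List.replicate n w := by
  intro n
  induction n with
  | zero => simp
  | succ n ih =>
      rw [pow_succ', FreeMonoid.toList_mul, ih, FreeMonoid.toList_of]
      rw [List.replicate_succ]
      rfl

section Central2

variable (kk : Type*) [Field kk]

/-- If `m` in the trace monoid has a letter `u`, and `w` is not adjacent to `u` (`w ≠ u`),
then `m` does not commute with any positive power of `w`. -/
lemma comm_power_contra {u w : W} (hwu : w ≠ u) (hnadj : ¬ Λ.Adj u w)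
    {x : M Λ} (hu : occ Λ u x ≠ 1) {K : ℕ} (hK : 0 < K)
    (hcm : mkM Λ (FreeMonoid.of w) ^ K * x = x * mkM Λ (FreeMonoid.of w) ^ K) : False := by
  obtain ⟨l', rfl⟩ := mkM_surjective Λ x
  have hprg : projF u w (FreeMonoid.of w) = FreeMonoid.of w := by
    simp [projF, FreeMonoid.lift_eval_of]
  have hcm' : (FreeMonoid.of w) ^ K * projF u w l'
      = projF u w l' * (FreeMonoid.of w) ^ K := by
    have h := congrArg (projM Λ u w hnadj) hcm
    simpa [map_mul, map_pow, projM_mkM, hprg] using h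
  have hlists := congrArg FreeMonoid.toList hcm'
  rw [FreeMonoid.toList_mul, FreeMonoid.toList_mul, toList_pow_of] at hlists
  have hall := freeMonoid_comm_power ((projF u w l').toList) K hK hlists.symm
  have humem : u ∈ (projF u w l').toList := by
    rw [projF_toList]
    refine List.mem_filter.mpr ⟨?_, by simp⟩
    have : l'.toList.count u ≠ 0 := by
      intro h0
      apply hu
      rw [occ_mkM, h0]
      rfl
    exact List.count_pos_iff.mp (Nat.pos_of_ne_zero this)
  exact hwu (hall u humem).symm

/-- Main combinatorial lemma: if no vertex is adjacent to every other vertex, an element of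
the monoid algebra of the trace monoid commuting with all generators is supported on `1`. -/
lemma central_support_one {f : MonoidAlgebra kk (M Λ)}
    (hcone : ∀ a : W, ∃ b, b ≠ a ∧ ¬ Λ.Adj a b)
    (hcomm : ∀ v : W, MonoidAlgebra.single (mkM Λ (FreeMonoid.of v)) (1:kk) * f
      = f * MonoidAlgebra.single (mkM Λ (FreeMonoid.of v)) 1)
    {m : M Λ} (hm : m ∈ f.coeff.support) : m = 1 := by
  by_contra hm1
  -- find a letter of m
  obtain ⟨l, rfl⟩ := mkM_surjective Λ m
  have hlne : l.toList ≠ [] := by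
    intro h
    apply hm1
    have : l = 1 := by
      have := congrArg FreeMonoid.ofList h
      simpa using this
    rw [this, map_one]
  set u := l.toList.head hlne with hu
  have hcount : 0 < l.toList.count u := List.count_pos_iff.mpr (List.head_mem hlne)
  obtain ⟨w, hwu, hnadj⟩ := hcone u
  set g := mkM Λ (FreeMonoid.of w) with hg
  -- occ u of g is 1
  have hoccg : occ Λ u g = 1 := by
    rw [hg, occ_mkM]
    simp [List.count_singleton', hwu]
  -- build the sequence
  have seq : ∀ j : ℕ, ∃ x, x ∈ f.coeff.support ∧ g ^ j * mkM Λ l = x * g ^ j := by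
    intro j
    induction j with
    | zero => exact ⟨mkM Λ l, hm, by simp⟩
    | succ j ih =>
        obtain ⟨x, hx, he⟩ := ih
        obtain ⟨x', hx', he'⟩ := central_step Λ kk (hcomm w) hx
        refine ⟨x', hx', ?_⟩
        calc g ^ (j+1) * mkM Λ l = g * (g ^ j * mkM Λ l) := by rw [pow_succ', mul_assoc]
          _ = g * (x * g ^ j) := by rw [he]
          _ = (g * x) * g ^ j := by rw [mul_assoc]
          _ = (x' * g) * g ^ j := by rw [he']
          _ = x' * g ^ (j+1) := by rw [mul_assoc, ← pow_succ']
  choose x hx he using seq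
  -- occ u is preserved along the sequence
  have hocc : ∀ j, occ Λ u (x j) = occ Λ u (mkM Λ l) := by
    intro j
    have := congrArg (occ Λ u) (he j)
    rw [map_mul, map_mul, map_pow, hoccg, one_pow, one_mul, mul_one] at this
    exact this.symm
  -- pigeonhole
  obtain ⟨i, j, hij, hxeq⟩ := Finite.exists_ne_map_eq_of_infinite
    (fun j => (⟨x j, hx j⟩ : {y // y ∈ f.coeff.support}))
  have hxeq' : x i = x j := congrArg Subtype.val hxeq
  have key : ∀ i j : ℕ, i < j → x i = x j → False := by
    intro i j hlt heq
    have e1 := he i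
    have e2 := he j
    rw [← heq] at e2
    have hKpos : 0 < j - i := by omega
    have hpow : g ^ j = g ^ (j - i) * g ^ i := by
      rw [← pow_add]
      congr 1
      omega
    rw [hpow] at e2
    have e3 : (g ^ (j-i) * x i) * g ^ i = (x i * g ^ (j-i)) * g ^ i := by
      calc (g ^ (j-i) * x i) * g ^ i = g ^ (j-i) * (x i * g ^ i) := by rw [mul_assoc]
        _ = g ^ (j-i) * (g ^ i * mkM Λ l) := by rw [e1]
        _ = (g ^ (j-i) * g ^ i) * mkM Λ l := by rw [mul_assoc]
        _ = x i * (g ^ (j-i) * g ^ i) := e2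
        _ = (x i * g ^ (j-i)) * g ^ i := by rw [mul_assoc]
    have e4 : g ^ (j - i) * x i = x i * g ^ (j - i) := mul_cancel_right Λ e3
    refine comm_power_contra Λ hwu hnadj ?_ hKpos e4
    rw [hocc i, occ_mkM]
    intro hcontr
    have : l.toList.count u = 0 := by
      have := congrArg Multiplicative.toAdd hcontr
      simpa using this
    omega
  rcases hij.lt_or_gt with h | h
  · exact (key i j h hxeq').elim
  · exact (key j i h hxeq'.symm).elim

end Central2

section LieAlg

variable (k : Type*) [Field k]

/-- The quotient map onto the RAAG Lie algebra as a Lie algebra morphism. -/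
noncomputable def mkL : FreeLieAlgebra k W →ₗ⁅k⁆ RaagLie k Λ where
  toLinearMap := (LieSubmodule.lieSpan k (FreeLieAlgebra k W)
    (raagLieRels k Λ) : Submodule k (FreeLieAlgebra k W)).mkQ
  map_lie' := by
    intro x y
    exact LieSubmodule.Quotient.mk_bracket _ x y

lemma mkL_surjective : Function.Surjective (mkL Λ k) :=
  Submodule.mkQ_surjective _

lemma mkL_of (v : W) : mkL Λ k (FreeLieAlgebra.of k v) = raagLieGen k Λ v := rfl

lemma gen_bracket {u v : W} (h : Λ.Adj u v) :
    ⁅raagLieGen k Λ u, raagLieGen k Λ v⁆ = 0 := by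
  rw [← mkL_of, ← mkL_of, ← LieHom.map_lie]
  have hrel : ⁅FreeLieAlgebra.of k u, FreeLieAlgebra.of k v⁆
      ∈ LieSubmodule.lieSpan k (FreeLieAlgebra k W) (raagLieRels k Λ) :=
    LieSubmodule.subset_lieSpan ⟨u, v, h, rfl⟩
  show (LieSubmodule.lieSpan k (FreeLieAlgebra k W)
    (raagLieRels k Λ) : Submodule k (FreeLieAlgebra k W)).mkQ _ = 0
  rwa [Submodule.mkQ_apply, Submodule.Quotient.mk_eq_zero]

lemma raag_hom_ext {P : Type*} [LieRing P] [LieAlgebra k P]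
    {g₁ g₂ : RaagLie k Λ →ₗ⁅k⁆ P}
    (h : ∀ v, g₁ (raagLieGen k Λ v) = g₂ (raagLieGen k Λ v)) : ∀ z, g₁ z = g₂ z := by
  have hc : g₁.comp (mkL Λ k) = g₂.comp (mkL Λ k) := by
    refine FreeLieAlgebra.hom_ext fun v => ?_
    exact h v
  intro z
  obtain ⟨w, rfl⟩ := mkL_surjective Λ k z
  exact LieHom.congr_fun hc w

lemma freeLie_lieSpan_top :
    ∀ z : FreeLieAlgebra k W, z ∈ LieSubalgebra.lieSpan k (FreeLieAlgebra k W)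
      (Set.range (FreeLieAlgebra.of k)) := by
  set S := LieSubalgebra.lieSpan k (FreeLieAlgebra k W) (Set.range (FreeLieAlgebra.of k))
  let f : FreeLieAlgebra k W →ₗ⁅k⁆ S :=
    FreeLieAlgebra.lift k fun v =>
      (⟨FreeLieAlgebra.of k v, LieSubalgebra.subset_lieSpan (Set.mem_range_self v)⟩ : S)
  have hc : S.incl.comp f = LieHom.id := by
    refine FreeLieAlgebra.hom_ext fun v => ?_
    show S.incl (f (FreeLieAlgebra.of k v)) = FreeLieAlgebra.of k v
    rw [show f (FreeLieAlgebra.of k v)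
      = ⟨FreeLieAlgebra.of k v, LieSubalgebra.subset_lieSpan (Set.mem_range_self v)⟩ from
      FreeLieAlgebra.lift_of_apply _ v]
    rfl
  intro z
  have := LieHom.congr_fun hc z
  have hz : z = S.incl (f z) := this.symm
  rw [hz]
  exact (f z).2

lemma raag_subalg_mem (S : LieSubalgebra k (RaagLie k Λ))
    (h : ∀ v, raagLieGen k Λ v ∈ S) : ∀ z, z ∈ S := by
  intro z
  obtain ⟨x, rfl⟩ := mkL_surjective Λ k z
  let T : LieSubalgebra k (FreeLieAlgebra k W) :=
    { Submodule.comap (mkL Λ k).toLinearMap S.toSubmodule with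
      lie_mem' := by
        intro a b ha hb
        have ha' : mkL Λ k a ∈ S := ha
        have hb' : mkL Λ k b ∈ S := hb
        show mkL Λ k ⁅a, b⁆ ∈ S
        rw [LieHom.map_lie]
        exact S.lie_mem ha' hb' }
  have hT : ∀ v, FreeLieAlgebra.of k v ∈ T := by
    intro v
    show mkL Λ k (FreeLieAlgebra.of k v) ∈ S
    rw [mkL_of]
    exact h v
  have hle : LieSubalgebra.lieSpan k (FreeLieAlgebra k W)
      (Set.range (FreeLieAlgebra.of k)) ≤ T :=
    LieSubalgebra.lieSpan_le.mpr (by rintro _ ⟨v, rfl⟩; exact hT v)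
  exact hle (freeLie_lieSpan_top k x)

end LieAlg

section Iota

variable (k : Type*) [Field k]

/-- The Lie morphism from the free Lie algebra into the trace monoid algebra. -/
noncomputable def iotaF : FreeLieAlgebra k W →ₗ⁅k⁆ MonoidAlgebra k (M Λ) :=
  FreeLieAlgebra.lift k fun v => MonoidAlgebra.single (mkM Λ (FreeMonoid.of v)) (1:k)

lemma iotaF_relator {u v : W} (h : Λ.Adj u v) :
    iotaF Λ k ⁅FreeLieAlgebra.of k u, FreeLieAlgebra.of k v⁆ = 0 := by
  rw [LieHom.map_lie]
  rw [iotaF, FreeLieAlgebra.lift_of_apply, FreeLieAlgebra.lift_of_apply, Ring.lie_def,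
    MonoidAlgebra.single_mul_single, MonoidAlgebra.single_mul_single]
  have hm : mkM Λ (FreeMonoid.of u) * mkM Λ (FreeMonoid.of v)
      = mkM Λ (FreeMonoid.of v) * mkM Λ (FreeMonoid.of u) := by
    rw [← map_mul, ← map_mul]
    have := mkM_swap Λ u v h 1 1
    simpa using this
  rw [hm, sub_self]

lemma iotaF_vanish : ∀ x ∈ LieSubmodule.lieSpan k (FreeLieAlgebra k W) (raagLieRels k Λ),
    iotaF Λ k x = 0 := by
  have hle : LieSubmodule.lieSpan k (FreeLieAlgebra k W) (raagLieRels k Λ)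
      ≤ (iotaF Λ k).ker := by
    rw [LieSubmodule.lieSpan_le]
    rintro _ ⟨u, v, h, rfl⟩
    exact LieHom.mem_ker.mpr (iotaF_relator Λ k h)
  exact fun x hx => LieHom.mem_ker.mp (hle hx)

/-- The Lie morphism from the RAAG Lie algebra into the trace monoid algebra. -/
noncomputable def iota : RaagLie k Λ →ₗ⁅k⁆ MonoidAlgebra k (M Λ) where
  toLinearMap := Submodule.liftQ _ (iotaF Λ k).toLinearMap
    (fun x hx => by
      rw [LinearMap.mem_ker, LieHom.coe_toLinearMap]
      exact iotaF_vanish Λ k x hx)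
  map_lie' := by
    intro x y
    obtain ⟨a, rfl⟩ := mkL_surjective Λ k x
    obtain ⟨b, rfl⟩ := mkL_surjective Λ k y
    rw [← LieHom.map_lie]
    show Submodule.liftQ _ _ _ (Submodule.Quotient.mk ⁅a,b⁆) =
      ⁅Submodule.liftQ _ _ _ (Submodule.Quotient.mk a),
       Submodule.liftQ _ _ _ (Submodule.Quotient.mk b)⁆
    rw [Submodule.liftQ_apply, Submodule.liftQ_apply, Submodule.liftQ_apply]
    rw [LieHom.coe_toLinearMap, LieHom.map_lie]

lemma iota_mkL (x : FreeLieAlgebra k W) : iota Λ k (mkL Λ k x) = iotaF Λ k x := rfl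

lemma iota_gen (v : W) :
    iota Λ k (raagLieGen k Λ v) = MonoidAlgebra.single (mkM Λ (FreeMonoid.of v)) (1:k) := by
  rw [← mkL_of, iota_mkL, iotaF, FreeLieAlgebra.lift_of_apply]

end Iota

section Rho

variable (k : Type*) [Field k]

/-- `ad` of a generator. -/
noncomputable def adGen (v : W) : Module.End k (RaagLie k Λ) :=
  LieAlgebra.ad k (RaagLie k Λ) (raagLieGen k Λ v)

lemma adGen_comm {u v : W} (h : Λ.Adj u v) :
    adGen Λ k u * adGen Λ k v = adGen Λ k v * adGen Λ k u := by
  have h1 : ⁅adGen Λ k u, adGen Λ k v⁆ = 0 := by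
    rw [adGen, adGen, ← LieHom.map_lie, gen_bracket Λ k h, map_zero]
  rw [Ring.lie_def, sub_eq_zero] at h1
  exact h1

/-- Right-normed adjoint action of a word. -/
noncomputable def rhoF : FreeMonoid W →* Module.End k (RaagLie k Λ) :=
  FreeMonoid.lift (adGen Λ k)

lemma rhoF_rel : ∀ a b, rel Λ a b → rhoF Λ k a = rhoF Λ k b := by
  rintro _ _ ⟨s, t, hst, rfl, rfl⟩
  rw [map_mul, map_mul]
  rw [rhoF, FreeMonoid.lift_eval_of, FreeMonoid.lift_eval_of]
  exact adGen_comm Λ k hst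

/-- The adjoint action on the trace monoid level. -/
noncomputable def rhoM : M Λ →* Module.End k (RaagLie k Λ) :=
  Con.lift _ (rhoF Λ k) (by
    refine Con.conGen_le.mpr ?_
    intro a b hab
    rw [Con.ker_rel]
    exact rhoF_rel Λ k a b hab)

lemma rhoM_mkM (l : FreeMonoid W) : rhoM Λ k (mkM Λ l) = rhoF Λ k l := rfl

/-- The adjoint action of the trace monoid algebra. -/
noncomputable def rhoA : MonoidAlgebra k (M Λ) →ₐ[k] Module.End k (RaagLie k Λ) :=
  MonoidAlgebra.lift k _ (M Λ) (rhoM Λ k)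

end Rho

section Delta

variable (k : Type*) [Field k]

/-- The right-normed bracketing of a word. -/
noncomputable def dList : List W → RaagLie k Λ
  | [] => 0
  | [v] => raagLieGen k Λ v
  | v :: l => ⁅raagLieGen k Λ v, dList l⁆

lemma dList_cons {v : W} {l : List W} (h : l ≠ []) :
    dList Λ k (v :: l) = ⁅raagLieGen k Λ v, dList Λ k l⁆ := by
  cases l with
  | nil => exact absurd rfl h
  | cons a t => rfl

lemma rhoF_ofList (l : List W) :
    rhoF Λ k (FreeMonoid.ofList l) = (l.map (adGen Λ k)).prod := by
  rw [rhoF, FreeMonoid.lift_apply]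
  rfl

lemma dList_append (x y : List W) (hy : y ≠ []) :
    dList Λ k (x ++ y) = rhoF Λ k (FreeMonoid.ofList x) (dList Λ k y) := by
  induction x with
  | nil => simp [rhoF_ofList]
  | cons v x' ih =>
      have hxy : x' ++ y ≠ [] := by simp [hy]
      rw [List.cons_append, dList_cons Λ k hxy, ih]
      rw [show FreeMonoid.ofList (v :: x') = FreeMonoid.of v * FreeMonoid.ofList x' from rfl,
        map_mul]
      rw [rhoF, FreeMonoid.lift_eval_of]
      rfl

/-- The right-normed bracketing on the trace monoid. -/
noncomputable def dM : M Λ → RaagLie k Λ :=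
  Quotient.lift (fun l => dList Λ k (FreeMonoid.toList l)) (by
    intro a b hab
    -- hab : tcon Λ a b
    have key : ∀ a b : FreeMonoid W, ConGen.Rel (rel Λ) a b →
        dList Λ k a.toList = dList Λ k b.toList ∧ mkM Λ a = mkM Λ b := by
      intro a b h
      induction h with
      | of x y hxy =>
          obtain ⟨s, t, hst, rfl, rfl⟩ := hxy
          constructor
          · show dList Λ k [s, t] = dList Λ k [t, s]
            show ⁅raagLieGen k Λ s, dList Λ k [t]⁆ = ⁅raagLieGen k Λ t, dList Λ k [s]⁆
            show ⁅raagLieGen k Λ s, raagLieGen k Λ t⁆ = ⁅raagLieGen k Λ t, raagLieGen k Λ s⁆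
            rw [gen_bracket Λ k hst, gen_bracket Λ k hst.symm]
          · exact Quotient.sound (ConGen.Rel.of _ _ ⟨s, t, hst, rfl, rfl⟩)
      | refl x => exact ⟨rfl, rfl⟩
      | symm _ ih => exact ⟨ih.1.symm, ih.2.symm⟩
      | trans _ _ ih1 ih2 => exact ⟨ih1.1.trans ih2.1, ih1.2.trans ih2.2⟩
      | mul h1 h2 ih1 ih2 =>
          rename_i w x y z
          constructor
          · -- dList (w*y) = dList (x*z)
            by_cases hy : y.toList = []
            · have hz : z.toList = [] := by
                have hmk := ih2.2
                have hlen := congrArg (lenM Λ) hmk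
                rw [lenM_mkM, lenM_mkM, hy] at hlen
                have := congrArg Multiplicative.toAdd hlen
                simpa using (List.eq_nil_of_length_eq_zero (by simpa using this.symm))
              show dList Λ k (w * y).toList = dList Λ k (x * z).toList
              rw [FreeMonoid.toList_mul, FreeMonoid.toList_mul, hy, hz,
                List.append_nil, List.append_nil]
              exact ih1.1
            · have hz : z.toList ≠ [] := by
                intro hz0
                have hmk := ih2.2
                have hlen := congrArg (lenM Λ) hmk
                rw [lenM_mkM, lenM_mkM, hz0] at hlen
                have := congrArg Multiplicative.toAdd hlen
                exact hy (List.eq_nil_of_length_eq_zero (by simpa using this))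
              show dList Λ k (w * y).toList = dList Λ k (x * z).toList
              rw [FreeMonoid.toList_mul, FreeMonoid.toList_mul]
              rw [dList_append Λ k _ _ hy, dList_append Λ k _ _ hz]
              have hw : FreeMonoid.ofList w.toList = w := FreeMonoid.ofList_toList w
              have hx : FreeMonoid.ofList x.toList = x := FreeMonoid.ofList_toList x
              rw [hw, hx, ih2.1]
              have hrho : rhoF Λ k w = rhoF Λ k x := by
                have := congrArg (rhoM Λ k) ih1.2
                rwa [rhoM_mkM, rhoM_mkM] at this
              rw [hrho]
          · rw [map_mul, map_mul, ih1.2, ih2.2]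
    exact (key a b hab).1)

lemma dM_mkM (l : FreeMonoid W) : dM Λ k (mkM Λ l) = dList Λ k l.toList := rfl

/-- The Dynkin-type projection on the trace monoid algebra. -/
noncomputable def deltaA : MonoidAlgebra k (M Λ) →ₗ[k] RaagLie k Λ :=
  Finsupp.linearCombination k (dM Λ k) ∘ₗ (MonoidAlgebra.coeffLinearEquiv k).toLinearMap

lemma deltaA_single (m : M Λ) (c : k) :
    deltaA Λ k (MonoidAlgebra.single m c) = c • dM Λ k m := by
  rw [deltaA]
  exact Finsupp.linearCombination_single _ _ _

end Delta

section Key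

variable (k : Type*) [Field k]

/-- Singletons of non-identity traces. -/
def SGen : Set (MonoidAlgebra k (M Λ)) :=
  {f | ∃ m : M Λ, m ≠ 1 ∧ f = MonoidAlgebra.single m 1}

lemma toList_ne_nil_of_ne_one {m' : M Λ} {l' : FreeMonoid W} (hl : mkM Λ l' = m')
    (h : m' ≠ 1) : l'.toList ≠ [] := by
  intro h0
  apply h
  rw [← hl]
  have : l' = 1 := by
    have := congrArg FreeMonoid.ofList h0
    simpa using this
  rw [this, map_one]

lemma dM_mul (m m' : M Λ) (h : m' ≠ 1) :
    dM Λ k (m * m') = rhoM Λ k m (dM Λ k m') := by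
  obtain ⟨l, rfl⟩ := mkM_surjective Λ m
  obtain ⟨l', rfl⟩ := mkM_surjective Λ m'
  have hl' : l'.toList ≠ [] := toList_ne_nil_of_ne_one Λ rfl h
  rw [← map_mul, dM_mkM, dM_mkM, rhoM_mkM, FreeMonoid.toList_mul]
  rw [dList_append Λ k _ _ hl', FreeMonoid.ofList_toList]

lemma rhoA_single (m : M Λ) (c : k) :
    rhoA Λ k (MonoidAlgebra.single m c) = c • rhoM Λ k m :=
  MonoidAlgebra.lift_single _ _ _

lemma key_lemma : ∀ (a : MonoidAlgebra k (M Λ)), ∀ b ∈ Submodule.span k (SGen Λ k),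
    deltaA Λ k (a * b) = rhoA Λ k a (deltaA Λ k b) := by
  have hsingle : ∀ (m : M Λ) (c : k) (m' : M Λ), m' ≠ 1 →
      deltaA Λ k (MonoidAlgebra.single m c * MonoidAlgebra.single m' 1)
        = rhoA Λ k (MonoidAlgebra.single m c) (deltaA Λ k (MonoidAlgebra.single m' 1)) := by
    intro m c m' hm'
    rw [MonoidAlgebra.single_mul_single, mul_one, deltaA_single, deltaA_single, rhoA_single,
      dM_mul Λ k m m' hm']
    rw [LinearMap.smul_apply, LinearMap.map_smul, one_smul]
  intro a b hb
  induction hb using Submodule.span_induction with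
  | mem x hx =>
      obtain ⟨m', hm', rfl⟩ := hx
      induction a using MonoidAlgebra.induction_linear with
      | zero => simp
      | add f g hf hg => rw [add_mul, map_add, map_add, hf, hg, LinearMap.add_apply]
      | single m c => exact hsingle m c m' hm'
  | zero => simp
  | add x y hx hy ihx ihy => rw [mul_add, map_add, map_add, ihx, ihy, LinearMap.map_add]
  | smul c x hx ih => rw [mul_smul_comm, map_smul, map_smul, ih, LinearMap.map_smul]

lemma rhoA_iota : ∀ z : RaagLie k Λ,
    rhoA Λ k (iota Λ k z) = LieAlgebra.ad k (RaagLie k Λ) z := by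
  have h := raag_hom_ext Λ k (g₁ := (rhoA Λ k).toLieHom.comp (iota Λ k))
    (g₂ := LieAlgebra.ad k (RaagLie k Λ)) ?_
  · intro z; exact h z
  · intro v
    show rhoA Λ k (iota Λ k (raagLieGen k Λ v)) = LieAlgebra.ad k _ (raagLieGen k Λ v)
    rw [iota_gen, rhoA_single, one_smul]
    rfl

end Key

section Graded

variable (k : Type*) [Field k]

/-- The length-homogeneous part of the trace monoid algebra. -/
def Bdeg (n : ℕ) : Submodule k (MonoidAlgebra k (M Λ)) where
  carrier := {f | ∀ m : M Λ, f.coeff m ≠ 0 → lenM Λ m = Multiplicative.ofAdd n}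
  add_mem' := by
    intro a b ha hb m hm
    rcases eq_or_ne (a.coeff m) 0 with h0 | h0
    · refine hb m ?_
      intro hb0
      apply hm
      rw [MonoidAlgebra.coeff_add, Finsupp.add_apply, h0, hb0, add_zero]
    · exact ha m h0
  zero_mem' := by intro m hm; simp at hm
  smul_mem' := by
    intro c f hf m hm
    refine hf m ?_
    intro h0
    apply hm
    rw [MonoidAlgebra.coeff_smul, Finsupp.smul_apply, h0, smul_zero]

lemma mem_Bdeg {n : ℕ} {f : MonoidAlgebra k (M Λ)} :
    f ∈ Bdeg Λ k n ↔ ∀ m : M Λ, f.coeff m ≠ 0 → lenM Λ m = Multiplicative.ofAdd n := Iff.rfl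

lemma Bdeg_mul {p q : ℕ} {f g : MonoidAlgebra k (M Λ)}
    (hf : f ∈ Bdeg Λ k p) (hg : g ∈ Bdeg Λ k q) : f * g ∈ Bdeg Λ k (p + q) := by
  classical
  intro x hx
  rw [MonoidAlgebra.coeff_mul] at hx
  obtain ⟨a₁, ha₁, h1⟩ := Finset.exists_ne_zero_of_sum_ne_zero hx
  obtain ⟨a₂, ha₂, h2⟩ := Finset.exists_ne_zero_of_sum_ne_zero h1
  have hcond : a₁ * a₂ = x := by
    by_contra hc
    exact h2 (by simp [hc])
  rw [← hcond, map_mul, hf a₁ (Finsupp.mem_support_iff.mp ha₁),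
    hg a₂ (Finsupp.mem_support_iff.mp ha₂), ← ofAdd_add]

lemma Bdeg_subset_span {n : ℕ} {f : MonoidAlgebra k (M Λ)} (hf : f ∈ Bdeg Λ k (n+1)) :
    f ∈ Submodule.span k (SGen Λ k) := by
  classical
  rw [← MonoidAlgebra.sum_coeff_single f, Finsupp.sum]
  refine Submodule.sum_mem _ ?_
  intro m hm
  have hm0 : f.coeff m ≠ 0 := Finsupp.mem_support_iff.mp hm
  have hm1 : m ≠ 1 := by
    intro h1
    have := hf m hm0
    rw [h1, map_one] at this
    have h2 := congrArg Multiplicative.toAdd this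
    simpa using h2.symm
  have : (MonoidAlgebra.single m (f.coeff m) : MonoidAlgebra k (M Λ))
      = (f.coeff m) • MonoidAlgebra.single m (1:k) := by
    rw [MonoidAlgebra.smul_single', mul_one]
  rw [this]
  exact Submodule.smul_mem _ _ (Submodule.subset_span ⟨m, hm1, rfl⟩)

/-- The submodule of elements homogeneous of degree `n` in a strong sense. -/
def HomD (n : ℕ) : Submodule k (RaagLie k Λ) where
  carrier := {z | iota Λ k z ∈ Bdeg Λ k n ∧ (n : k) • z = deltaA Λ k (iota Λ k z)}
  add_mem' := by
    intro a b ha hb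
    refine ⟨?_, ?_⟩
    · rw [map_add]; exact (Bdeg Λ k n).add_mem ha.1 hb.1
    · rw [map_add, map_add, smul_add, ha.2, hb.2]
  zero_mem' := by
    refine ⟨?_, ?_⟩
    · rw [map_zero]; exact (Bdeg Λ k n).zero_mem
    · rw [map_zero, map_zero, smul_zero]
  smul_mem' := by
    intro c z hz
    refine ⟨?_, ?_⟩
    · rw [map_smul]; exact (Bdeg Λ k n).smul_mem c hz.1
    · rw [map_smul, map_smul, ← hz.2, smul_comm]

lemma mem_HomD {n : ℕ} {z : RaagLie k Λ} :
    z ∈ HomD Λ k n ↔ iota Λ k z ∈ Bdeg Λ k n ∧ (n : k) • z = deltaA Λ k (iota Λ k z) :=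
  Iff.rfl

lemma gen_mem_HomD (v : W) : raagLieGen k Λ v ∈ HomD Λ k 1 := by
  rw [mem_HomD]
  constructor
  · rw [iota_gen, mem_Bdeg]
    intro m hm
    classical
    rw [MonoidAlgebra.coeff_single, Finsupp.single_apply] at hm
    have hmv : (mkM Λ (FreeMonoid.of v)) = m := by
      by_contra hc
      rw [if_neg hc] at hm
      exact hm rfl
    rw [← hmv, lenM_mkM]
    rfl
  · rw [iota_gen, deltaA_single, one_smul, dM_mkM]
    rw [Nat.cast_one, one_smul]
    rfl

lemma bracket_mem_HomD {p q : ℕ} {z w : RaagLie k Λ}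
    (hz : z ∈ HomD Λ k (p+1)) (hw : w ∈ HomD Λ k (q+1)) :
    ⁅z, w⁆ ∈ HomD Λ k (p + q + 2) := by
  obtain ⟨hz1, hz2⟩ := mem_HomD Λ k |>.mp hz
  obtain ⟨hw1, hw2⟩ := mem_HomD Λ k |>.mp hw
  have hbr : iota Λ k ⁅z, w⁆ = iota Λ k z * iota Λ k w - iota Λ k w * iota Λ k z := by
    rw [LieHom.map_lie, Ring.lie_def]
  constructor
  · rw [hbr]
    have h1 : iota Λ k z * iota Λ k w ∈ Bdeg Λ k ((p+1) + (q+1)) := Bdeg_mul Λ k hz1 hw1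
    have h2 : iota Λ k w * iota Λ k z ∈ Bdeg Λ k ((q+1) + (p+1)) := Bdeg_mul Λ k hw1 hz1
    have e1 : (p+1) + (q+1) = p + q + 2 := by omega
    have e2 : (q+1) + (p+1) = p + q + 2 := by omega
    rw [e1] at h1
    rw [e2] at h2
    exact (Bdeg Λ k _).sub_mem h1 h2
  · rw [hbr, map_sub]
    have hk1 : deltaA Λ k (iota Λ k z * iota Λ k w)
        = rhoA Λ k (iota Λ k z) (deltaA Λ k (iota Λ k w)) :=
      key_lemma Λ k _ _ (Bdeg_subset_span Λ k hw1)
    have hk2 : deltaA Λ k (iota Λ k w * iota Λ k z)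
        = rhoA Λ k (iota Λ k w) (deltaA Λ k (iota Λ k z)) :=
      key_lemma Λ k _ _ (Bdeg_subset_span Λ k hz1)
    rw [hk1, hk2, rhoA_iota, rhoA_iota, ← hz2, ← hw2]
    rw [LinearMap.map_smul, LinearMap.map_smul]
    have hadz : (LieAlgebra.ad k (RaagLie k Λ)) z w = ⁅z, w⁆ := rfl
    have hadw : (LieAlgebra.ad k (RaagLie k Λ)) w z = ⁅w, z⁆ := rfl
    rw [hadz, hadw]
    have hskew : ⁅w, z⁆ = -⁅z, w⁆ := (lie_skew w z).symm
    rw [hskew, smul_neg, sub_neg_eq_add]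
    rw [← add_smul]
    congr 1
    push_cast
    ring
end Graded

section Inj

variable (k : Type*) [Field k]

lemma iSup_HomD_top : ∀ z : RaagLie k Λ, z ∈ ⨆ n : ℕ, HomD Λ k (n+1) := by
  have hbr : ∀ a ∈ ⨆ n : ℕ, HomD Λ k (n+1), ∀ b ∈ ⨆ n : ℕ, HomD Λ k (n+1),
      ⁅a, b⁆ ∈ ⨆ n : ℕ, HomD Λ k (n+1) := by
    intro a ha
    refine Submodule.iSup_induction' (motive := fun x _ => ∀ b ∈ ⨆ n : ℕ, HomD Λ k (n+1),
      ⁅x, b⁆ ∈ ⨆ n : ℕ, HomD Λ k (n+1)) _ ?_ ?_ ?_ ha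
    · intro i x hx b hb
      refine Submodule.iSup_induction' (motive := fun y _ => ⁅x, y⁆ ∈ ⨆ n : ℕ, HomD Λ k (n+1))
        _ ?_ ?_ ?_ hb
      · intro j y hy
        have := bracket_mem_HomD Λ k hx hy
        exact Submodule.mem_iSup_of_mem (i + j + 1) this
      · show ⁅x, (0 : RaagLie k Λ)⁆ ∈ ⨆ n : ℕ, HomD Λ k (n+1)
        rw [lie_zero x]
        exact Submodule.zero_mem _
      · intro y₁ y₂ h₁ h₂ ih₁ ih₂
        show ⁅x, y₁ + y₂⁆ ∈ ⨆ n : ℕ, HomD Λ k (n+1)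
        rw [lie_add x y₁ y₂]
        exact Submodule.add_mem _ ih₁ ih₂
    · intro b hb
      show ⁅(0 : RaagLie k Λ), b⁆ ∈ ⨆ n : ℕ, HomD Λ k (n+1)
      rw [zero_lie b]
      exact Submodule.zero_mem _
    · intro x y hx hy ihx ihy b hb
      show ⁅x + y, b⁆ ∈ ⨆ n : ℕ, HomD Λ k (n+1)
      rw [add_lie x y b]
      exact Submodule.add_mem _ (ihx b hb) (ihy b hb)
  let S : LieSubalgebra k (RaagLie k Λ) :=
    { (⨆ n : ℕ, HomD Λ k (n+1) : Submodule k (RaagLie k Λ)) with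
      lie_mem' := fun {a b} ha hb => hbr a ha b hb }
  have hgen : ∀ v, raagLieGen k Λ v ∈ S := by
    intro v
    show raagLieGen k Λ v ∈ ⨆ n : ℕ, HomD Λ k (n+1)
    exact Submodule.mem_iSup_of_mem 0 (gen_mem_HomD Λ k v)
  exact raag_subalg_mem Λ k S hgen

lemma iota_injective0 [CharZero k] {z : RaagLie k Λ} (hz : iota Λ k z = 0) : z = 0 := by
  classical
  have hD := iSup_HomD_top Λ k z
  rw [Submodule.mem_iSup_iff_exists_dfinsupp'] at hD
  obtain ⟨f, hf⟩ := hD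
  have hsum : iota Λ k z = ∑ i ∈ f.support, iota Λ k ((f i : RaagLie k Λ)) := by
    conv_lhs => rw [← hf]
    rw [DFinsupp.sum]
    exact map_sum (iota Λ k).toLinearMap _ _
  have hcomp : ∀ n : ℕ, iota Λ k ((f n : RaagLie k Λ)) = 0 := by
    intro n₀
    ext m
    rw [MonoidAlgebra.coeff_zero, Finsupp.zero_apply]
    by_cases hm : lenM Λ m = Multiplicative.ofAdd ((n₀ : ℕ) + 1)
    · have h1 : (iota Λ k z).coeff m = ∑ i ∈ f.support, (iota Λ k ((f i : RaagLie k Λ))).coeff m := by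
        rw [hsum, MonoidAlgebra.coeff_sum, Finsupp.finset_sum_apply]
      rw [hz, MonoidAlgebra.coeff_zero, Finsupp.zero_apply] at h1
      have h2 : ∑ i ∈ f.support, (iota Λ k ((f i : RaagLie k Λ))).coeff m
          = (iota Λ k ((f n₀ : RaagLie k Λ))).coeff m := by
        refine Finset.sum_eq_single n₀ ?_ ?_
        · intro i _ hne
          by_contra hne0
          have hlen := ((f i).2.1) m hne0
          rw [hm] at hlen
          have := congrArg Multiplicative.toAdd hlen
          simp at this
          omega
        · intro hnot
          rw [DFinsupp.notMem_support_iff.mp hnot]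
          simp
      rw [h2] at h1
      exact h1.symm
    · by_contra h0
      exact hm (((f n₀).2.1) m h0)
  have hzero : ∀ n : ℕ, ((f n : RaagLie k Λ)) = 0 := by
    intro n
    have hc := (f n).2.2
    rw [hcomp n, map_zero] at hc
    have hne : ((n + 1 : ℕ) : k) ≠ 0 := Nat.cast_ne_zero.mpr (Nat.succ_ne_zero n)
    exact (smul_eq_zero.mp hc).resolve_left hne
  rw [← hf, DFinsupp.sum]
  exact Finset.sum_eq_zero fun i _ => hzero i

end Inj

section Eps

variable (k : Type*) [Field k]

/-- The augmentation of the trace monoid algebra. -/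
noncomputable def epsA : MonoidAlgebra k (M Λ) →ₐ[k] k :=
  MonoidAlgebra.lift k k (M Λ) (Con.lift _ (FreeMonoid.lift fun _ => (0:k)) (by
    refine Con.conGen_le.mpr ?_
    rintro _ _ ⟨s, t, hst, rfl, rfl⟩
    rw [Con.ker_rel, map_mul, map_mul]
    rw [FreeMonoid.lift_eval_of, FreeMonoid.lift_eval_of, mul_comm]))

lemma epsA_gen (v : W) :
    epsA Λ k (MonoidAlgebra.single (mkM Λ (FreeMonoid.of v)) (1:k)) = 0 := by
  rw [epsA, MonoidAlgebra.lift_single]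
  show (1:k) • (FreeMonoid.lift fun _ => (0:k)) (FreeMonoid.of v) = 0
  rw [FreeMonoid.lift_eval_of, smul_zero]

lemma epsA_one_coeff (c : k) :
    epsA Λ k (MonoidAlgebra.single (1 : M Λ) c) = c := by
  rw [epsA, MonoidAlgebra.lift_single, map_one, smul_eq_mul, mul_one]

lemma epsA_iota (z : RaagLie k Λ) : epsA Λ k (iota Λ k z) = 0 := by
  let S : LieSubalgebra k (RaagLie k Λ) :=
    { LinearMap.ker ((epsA Λ k).toLinearMap ∘ₗ (iota Λ k).toLinearMap) with
      lie_mem' := by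
        intro a b _ _
        show epsA Λ k (iota Λ k ⁅a, b⁆) = 0
        rw [LieHom.map_lie, Ring.lie_def, map_sub, map_mul, map_mul, mul_comm, sub_self] }
  have hgen : ∀ v, raagLieGen k Λ v ∈ S := by
    intro v
    show epsA Λ k (iota Λ k (raagLieGen k Λ v)) = 0
    rw [iota_gen]
    exact epsA_gen Λ k v
  exact raag_subalg_mem Λ k S hgen z

end Eps

section Main

variable (k : Type*) [Field k]

theorem center_trivial [CharZero k] (hcone : ∀ a : W, ∃ b, b ≠ a ∧ ¬ Λ.Adj a b) :
    LieAlgebra.center k (RaagLie k Λ) = ⊥ := by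
  rw [eq_bot_iff]
  intro z hz
  rw [LieSubmodule.mem_bot]
  have hcentral : ∀ x : RaagLie k Λ, ⁅x, z⁆ = 0 :=
    (LieModule.mem_maxTrivSubmodule k (RaagLie k Λ) (RaagLie k Λ) z).mp hz
  set f := iota Λ k z with hfdef
  have hcomm : ∀ v : W, MonoidAlgebra.single (mkM Λ (FreeMonoid.of v)) (1:k) * f
      = f * MonoidAlgebra.single (mkM Λ (FreeMonoid.of v)) 1 := by
    intro v
    have h0 : ⁅raagLieGen k Λ v, z⁆ = 0 := hcentral _
    have h1 := congrArg (iota Λ k) h0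
    rw [LieHom.map_lie, map_zero, Ring.lie_def, iota_gen, sub_eq_zero] at h1
    exact h1
  have hsupp : ∀ m ∈ f.coeff.support, m = (1 : M Λ) :=
    fun m hm => central_support_one Λ k hcone hcomm hm
  have hf1 : f = MonoidAlgebra.single (1 : M Λ) (f.coeff 1) := by
    classical
    ext m
    rcases eq_or_ne m 1 with rfl | hm
    · rw [MonoidAlgebra.coeff_single, Finsupp.single_eq_same]
    · rw [MonoidAlgebra.coeff_single, Finsupp.single_apply, if_neg (fun h => hm h.symm)]
      by_contra h0
      exact hm (hsupp m (Finsupp.mem_support_iff.mpr h0))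
  have heps : f.coeff 1 = 0 := by
    have := epsA_iota Λ k z
    rw [← hfdef] at this
    rw [hf1, epsA_one_coeff] at this
    exact this
  have hf0 : f = 0 := by
    rw [hf1, heps]
    simp
  exact iota_injective0 Λ k hf0

end Main

end RaagProof

theorem raagLie_center_trivial (k : Type*) [Field k] [CharZero k]
    {V : Type*} [Fintype V] (Γ : SimpleGraph V) :
    LieAlgebra.center k (RaagLie k (Γ.induce (gammaZero Γ))) = ⊥ := by
  classical
  refine RaagProof.center_trivial (Γ.induce (gammaZero Γ)) k ?_
  rintro ⟨a, ha⟩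
  obtain ⟨u, hua, hnadj⟩ := ha
  have hu : u ∈ gammaZero Γ := ⟨a, Ne.symm hua, fun h => hnadj h.symm⟩
  refine ⟨⟨u, hu⟩, ?_, ?_⟩
  · intro h
    exact hua (congrArg Subtype.val h)
  · intro h
    have h2 : Γ.Adj a u := by
      have := h
      simp only [SimpleGraph.comap_adj, SimpleGraph.induce_eq_coe_induce_top] at this
      exact h
    exact hnadj h2
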